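/- Let x ∈ A^ℤ be a uniformly recurrent sequence and let u be a nonempty prefix of x. Let v be a nonempty prefix of the derived sequence D_u(x), and set w = Θ_{x,u}(v)u. Then: w is a prefix of x; D_v(D_u(x)) = D_w(x); and Θ_{x,u} ∘ Θ_{D_u(x), v} = Θ_{x,w}. -/

import Mathlib

open MeasureTheory Filter Matrix Set

namespace PisotDE

variable {A B : Type*}

/-- Extension of a letter-to-word map to words, by concatenation. -/
def wordApply (σ : A → List B) (w : List A) : List B := w.flatMap σ

/-- Iterates of an endomorphism of the free monoid. -/
def substIter (σ : A → List A) : ℕ → A → List A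
  | 0 => fun a => [a]
  | n + 1 => fun a => wordApply (substIter σ n) (σ a)

/-- σ is a substitution: some letter a has σ(a) starting with a, and |σⁿ(b)| → ∞ for all b. -/
def IsSubstitution (σ : A → List A) : Prop :=
  (∃ a, (σ a).head? = some a) ∧
    ∀ b, Tendsto (fun n => (substIter σ n b).length) atTop atTop

/-- Incidence matrix: entry (i,j) counts occurrences of i in σ(j). -/
def incMat [Fintype A] [DecidableEq A] (σ : A → List A) : Matrix A A ℕ :=
  Matrix.of fun i j => (σ j).count i

/-- Primitivity: a power of the incidence matrix has all entries positive. -/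
def IsPrimitive [Fintype A] [DecidableEq A] (σ : A → List A) : Prop :=
  ∃ k : ℕ, ∀ i j, 0 < (incMat σ ^ k) i j

def IsLeftProper (σ : A → List A) : Prop := ∃ a, ∀ b, (σ b).head? = some a
def IsRightProper (σ : A → List A) : Prop := ∃ a, ∀ b, (σ b).getLast? = some a
def IsProper (σ : A → List A) : Prop := IsLeftProper σ ∧ IsRightProper σ

/-- The factor x_{[i, i+len-1]} of a bi-infinite sequence. -/
def subword (x : ℤ → A) (i : ℤ) (len : ℕ) : List A :=
  List.ofFn fun k : Fin len => x (i + (k : ℕ))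

/-- Language of a substitution: words occurring in some σⁿ(b). -/
def lang (σ : A → List A) : Set (List A) := { w | ∃ n b, w <:+: substIter σ n b }

/-- The substitutive subshift Ω_σ. -/
def Omega (σ : A → List A) : Set (ℤ → A) := { x | ∀ i len, subword x i len ∈ lang σ }

/-- The shift map. -/
def shift (x : ℤ → A) : ℤ → A := fun n => x (n + 1)

/-- The subshift generated by the sequence x (all sequences whose factors are factors of x). -/
def OmegaOf (x : ℤ → A) : Set (ℤ → A) :=
  { z | ∀ i len, ∃ j : ℤ, subword z i len = subword x j len }

/-- y is the image of x under the morphism σ acting on bi-infinite sequences,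
concatenating around position 0. -/
def SubstPt (σ : A → List B) (x : ℤ → A) (y : ℤ → B) : Prop :=
  ∃ p : ℤ → ℤ, p 0 = 0 ∧ (∀ n, p (n + 1) = p n + (σ (x n)).length) ∧
    ∀ (n : ℤ) (k : Fin (σ (x n)).length), y (p n + (k : ℕ)) = (σ (x n)).get k

/-- Image of a set of sequences under the substitution. -/
def substImg (σ : A → List A) (X : Set (ℤ → A)) : Set (ℤ → A) :=
  { y | ∃ x ∈ X, SubstPt σ x y }

/-- The cylinder [a] inside Ω_σ. -/
def cylOmega (σ : A → List A) (a : A) : Set (ℤ → A) := { x ∈ Omega σ | x 0 = a }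

/-- ξᵐ(Ω_ξ). -/
def towerBase (σ : A → List A) (m : ℕ) : Set (ℤ → A) := substImg (substIter σ m) (Omega σ)

/-- ξᵐ([a]). -/
def towerCylElem (σ : A → List A) (m : ℕ) (a : A) : Set (ℤ → A) :=
  { y | ∃ x, x ∈ cylOmega σ a ∧ SubstPt (substIter σ m) x y }

/-- The Kakutani-Rohlin piece S^{-k} ξᵐ([a]) (inside Ω_ξ). -/
def krPiece (σ : A → List A) (m : ℕ) (a : A) (k : ℕ) : Set (ℤ → A) :=
  { x ∈ Omega σ | shift^[k] x ∈ towerCylElem σ m a }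

/-- Entrance time of x into the base ξ^{n-1}(Ω_ξ). -/
noncomputable def rTime (σ : A → List A) (n : ℕ) (x : ℤ → A) : ℕ :=
  sInf { k : ℕ | shift^[k] x ∈ towerBase σ (n - 1) }

/-- The vector s_k(x): s_k(x)_a counts the i with r_k(x) < i ≤ r_{k+1}(x)
such that Sⁱx ∈ ξ^{k-1}([a]). -/
noncomputable def sVec (σ : A → List A) (k : ℕ) (x : ℤ → A) : A → ℤ :=
  fun a => (({ i : ℕ | rTime σ k x < i ∧ i ≤ rTime σ (k + 1) x ∧
      shift^[i] x ∈ towerCylElem σ (k - 1) a }).ncard : ℤ)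

/-- λ is an eigenvalue of the measure-theoretic system (Ω, S, μ):
there is a nonzero f ∈ L²(μ) with f∘S = λ f. -/
def IsEigenvalue [MeasurableSpace A] (μ : Measure (ℤ → A)) (lam : ℂ) : Prop :=
  ∃ f : (ℤ → A) → ℂ, MemLp f 2 μ ∧ ¬ f =ᵐ[μ] 0 ∧
    (fun x => f (shift x)) =ᵐ[μ] fun x => lam * f x

/-- Characteristic polynomial of a natural matrix, over ℂ. -/
noncomputable def charpolyC [Fintype A] [DecidableEq A] (M : Matrix A A ℕ) : Polynomial ℂ :=
  (M.map (Nat.cast : ℕ → ℂ)).charpoly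

/-- Pisot type: dominant real root β > 1, every other root β' has 0 < |β'| < 1. -/
def IsPisotType [Fintype A] [DecidableEq A] (M : Matrix A A ℕ) : Prop :=
  ∃ β : ℝ, 1 < β ∧ (charpolyC M).IsRoot (β : ℂ) ∧
    ∀ z : ℂ, (charpolyC M).IsRoot z → z ≠ (β : ℂ) → 0 < ‖z‖ ∧ ‖z‖ < 1

/-- Weakly irreducible Pisot type: the dominant root is a real Pisot number β > 1,
the other roots are algebraic conjugates of β, 0, or roots of unity. -/
def IsWIPisot [Fintype A] [DecidableEq A] (M : Matrix A A ℕ) : Prop :=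
  ∃ β : ℝ, 1 < β ∧ (charpolyC M).IsRoot (β : ℂ) ∧
    (∀ z : ℂ, Polynomial.aeval z (minpoly ℚ ((β : ℝ) : ℂ)) = 0 → z ≠ (β : ℂ) → ‖z‖ < 1) ∧
    ∀ z : ℂ, (charpolyC M).IsRoot z →
      (Polynomial.aeval z (minpoly ℚ ((β : ℝ) : ℂ)) = 0 ∨ z = 0 ∨ ∃ n : ℕ, 0 < n ∧ z ^ n = 1)

/-- Unimodularity: determinant ±1. -/
def IsUnimodular [Fintype A] [DecidableEq A] (M : Matrix A A ℕ) : Prop :=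
  (M.map (Nat.cast : ℕ → ℤ)).det = 1 ∨ (M.map (Nat.cast : ℕ → ℤ)).det = -1

/-- The transpose of the incidence matrix, with real entries. -/
noncomputable def MtR [Fintype A] [DecidableEq A] (σ : A → List A) : Matrix A A ℝ :=
  ((incMat σ).map (Nat.cast : ℕ → ℝ))ᵀ

/-- The vector μ⃗(n), μ⃗(n)_a = μ(ξ^{n-1}([a])). -/
noncomputable def muVec [MeasurableSpace A] (σ : A → List A) (μ : Measure (ℤ → A)) (n : ℕ) : A → ℝ :=
  fun a => (μ (towerCylElem σ (n - 1) a)).toReal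

/-- Rational independence of 1, α_1, …, α_m. -/
def RatIndepOne {m : ℕ} (α : Fin m → ℝ) : Prop :=
  ∀ (c₀ : ℤ) (c : Fin m → ℤ), (c₀ : ℝ) + ∑ i, (c i : ℝ) * α i = 0 →
    c₀ = 0 ∧ ∀ i, c i = 0

/-- The word u occurs in x at position i. -/
def occursAt (x : ℤ → A) (u : List A) (i : ℤ) : Prop :=
  ∀ k : Fin u.length, x (i + (k : ℕ)) = u.get k

/-- Uniform recurrence: every factor occurs with bounded gaps. -/
def UniformlyRecurrent (x : ℤ → A) : Prop :=
  ∀ u : List A, (∃ i, occursAt x u i) →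
    ∃ N : ℕ, ∀ i : ℤ, ∃ j : ℤ, i ≤ j ∧ j < i + (N : ℤ) ∧ occursAt x u j

/-- Return words to u of x. -/
def returnWords (x : ℤ → A) (u : List A) : Set (List A) :=
  { w | ∃ i j : ℤ, i < j ∧ occursAt x u i ∧ occursAt x u j ∧
      (∀ l : ℤ, i < l → l < j → ¬ occursAt x u l) ∧ w = subword x i (j - i).toNat }

/-- Circular code. -/
def IsCircularCode (R : Set (List A)) : Prop :=
  ∀ (l l' : List (List A)) (w s t : List A),
    (∀ v ∈ l, v ∈ R) → (∀ v ∈ l', v ∈ R) → w ∈ R → s ≠ [] →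
    w = t ++ s → l.flatten = s ++ l'.flatten ++ t → t = []

/-- p : ℤ → ℤ enumerates increasingly all occurrences of u in x, with p 0 = 0. -/
def IsOccEnum (x : ℤ → A) (u : List A) (p : ℤ → ℤ) : Prop :=
  p 0 = 0 ∧ StrictMono p ∧ (∀ n, occursAt x u (p n)) ∧ ∀ i, occursAt x u i → ∃ n, p n = i

/-- The n-th return word m_n in the decomposition of x along occurrences p. -/
def retWordAt (x : ℤ → A) (p : ℤ → ℤ) (n : ℤ) : List A :=
  subword x (p n) (p (n + 1) - p n).toNat

/-- (Θ, y) is the canonical return-word coding of x on u: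
Θ = Θ_{x,u} (on the letters occurring in y) and y = D_u(x), the derived sequence,
with letters 0,1,2,… given to return words in order of first appearance in (m_i)_{i ≥ 0}. -/
def IsReturnCoding (x : ℤ → A) (u : List A) (Θ : ℕ → List A) (y : ℤ → ℕ) : Prop :=
  ∃ p : ℤ → ℤ, IsOccEnum x u p ∧
    (∀ n : ℤ, Θ (y n) = retWordAt x p n) ∧
    (∀ n m : ℤ, y n = y m ↔ retWordAt x p n = retWordAt x p m) ∧
    (∀ n : ℤ, ∃ m : ℕ, y m = y n) ∧
    (∀ n : ℕ, y n ≤ Set.ncard { k : ℕ | ∃ m : ℕ, m < n ∧ y m = k })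

/-- Letters actually used by a derived sequence. -/
def usedLetters (y : ℤ → ℕ) : Set ℕ := { k | ∃ n : ℤ, y n = k }

/-- Primitivity of a substitution restricted to a set of letters. -/
def IsPrimitiveOn (τ : B → List B) (L : Set B) : Prop :=
  ∃ k : ℕ, 0 < k ∧ ∀ a ∈ L, ∀ b ∈ L, b ∈ substIter τ k a

/-- τ is the return substitution σ_u, i.e. Θ ∘ τ = σ ∘ Θ on the used letters. -/
def IsReturnSubst (σ : A → List A) (x : ℤ → A) (u : List A)
    (Θ : ℕ → List A) (y : ℤ → ℕ) (τ : ℕ → List ℕ) : Prop :=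
  IsReturnCoding x u Θ y ∧
    ∀ k ∈ usedLetters y, (∀ j ∈ τ k, j ∈ usedLetters y) ∧
      wordApply Θ (τ k) = wordApply σ (Θ k)

/-- x is not periodic for the shift. -/
def NotShiftPeriodic (x : ℤ → A) : Prop := ¬ ∃ p : ℤ, p ≠ 0 ∧ ∀ n, x (n + p) = x n

/-- The splitting ℝ^A = E⁰ ⊕ Eˢ ⊕ Eᵘ ⊕ Eᵇ into M_ξᵗ-invariant subspaces, with
E⁰ killed by M_ξᵗ, Eˢ contracted to 0 but never killed, Eᵘ expanded, Eᵇ bounded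
away from 0 and ∞ and never killed. -/
def IsStableSplitting [Fintype A] [DecidableEq A] (σ : A → List A)
    (E0 Es Eu Eb : Submodule ℝ (A → ℝ)) : Prop :=
  (∀ x : A → ℝ, ∃ x0 ∈ E0, ∃ xs ∈ Es, ∃ xu ∈ Eu, ∃ xb ∈ Eb, x = x0 + xs + xu + xb) ∧
  (∀ x0 ∈ E0, ∀ xs ∈ Es, ∀ xu ∈ Eu, ∀ xb ∈ Eb,
      x0 + xs + xu + xb = 0 → x0 = 0 ∧ xs = 0 ∧ xu = 0 ∧ xb = 0) ∧
  (∀ v ∈ Es, (MtR σ).mulVec v ∈ Es) ∧ (∀ v ∈ Eu, (MtR σ).mulVec v ∈ Eu) ∧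
  (∀ v ∈ Eb, (MtR σ).mulVec v ∈ Eb) ∧
  (∀ v ∈ E0, (MtR σ).mulVec v = 0) ∧
  (∀ v ∈ Es, v ≠ 0 → Tendsto (fun k => (MtR σ ^ k).mulVec v) atTop (nhds 0) ∧
      ∀ n, (MtR σ ^ n).mulVec v ≠ 0) ∧
  (∀ v ∈ Eu, v ≠ 0 → Tendsto (fun k => ‖(MtR σ ^ k).mulVec v‖) atTop atTop) ∧
  (∀ v ∈ Eb, v ≠ 0 → (∃ c C : ℝ, 0 < c ∧ ∀ k : ℕ, c ≤ ‖(MtR σ ^ k).mulVec v‖ ∧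
      ‖(MtR σ ^ k).mulVec v‖ ≤ C) ∧ ∀ n, (MtR σ ^ n).mulVec v ≠ 0)

/-- The map F(x) = (Σ_{k ≥ 1} ⟨s_k(x), (M_ξᵗ)ᵏ v(i)⟩)_{1 ≤ i ≤ m}. -/
noncomputable def Fmap [Fintype A] [DecidableEq A] (σ : A → List A) {m : ℕ}
    (v : Fin m → A → ℝ) (x : ℤ → A) : Fin m → ℝ :=
  fun i => ∑' k : ℕ,
    dotProduct (fun a => ((sVec σ (k + 1) x a : ℤ) : ℝ)) ((MtR σ ^ (k + 1)).mulVec (v i))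

/-- The canonical projection ℝ^m → ℝ^m/ℤ^m = 𝕋^m. -/
noncomputable def torusProj {m : ℕ} (z : Fin m → ℝ) : Fin m → AddCircle (1 : ℝ) :=
  fun i => (z i : AddCircle (1 : ℝ))


section DerivedAux

variable {A : Type*}

lemma subword_length (x : ℤ → A) (i : ℤ) (len : ℕ) : (subword x i len).length = len := by
  simp [subword]

lemma subword_eq_iff {x : ℤ → A} {i j : ℤ} {n : ℕ} :
    subword x i n = subword x j n ↔ ∀ k : ℕ, k < n → x (i + k) = x (j + k) := by
  rw [subword, subword, List.ofFn_inj]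
  constructor
  · intro h k hk
    exact congrFun h ⟨k, hk⟩
  · intro h
    funext k
    exact h k k.isLt

lemma occursAt_iff (x : ℤ → A) (u : List A) (i : ℤ) :
    occursAt x u i ↔ subword x i u.length = u := by
  rw [subword, occursAt]
  constructor
  · intro h
    apply List.ext_get (by simp)
    intro n h1 h2
    simpa using h ⟨n, h2⟩
  · intro h k
    have h3 := congrArg (fun l => l[(k : ℕ)]?) h
    simp only [List.getElem?_ofFn, List.ofFnNthVal, k.isLt, dif_pos,
      List.getElem?_eq_getElem, Option.some.injEq] at h3
    simpa [List.get_eq_getElem] using h3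

lemma subword_append (x : ℤ → A) (i : ℤ) (a b : ℕ) :
    subword x i (a + b) = subword x i a ++ subword x (i + a) b := by
  rw [subword, List.ofFn_add]
  congr 1
  all_goals
    rw [subword, List.ofFn_inj]
    funext k
    simp [add_assoc]

lemma subword_congr {x : ℤ → A} {i j : ℤ} {n : ℕ} (h : subword x i n = subword x j n)
    (δ len : ℕ) (hlen : δ + len ≤ n) :
    subword x (i + δ) len = subword x (j + δ) len := by
  rw [subword_eq_iff] at h ⊢
  intro k hk
  have := h (δ + k) (by omega)
  push_cast at this ⊢
  rw [add_assoc, add_assoc]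
  exact this

lemma strictMono_int_le {f : ℤ → ℤ} (hf : StrictMono f) {a b : ℤ} (hab : a ≤ b) :
    f a + (b - a) ≤ f b := by
  obtain ⟨k, hk⟩ : ∃ k : ℕ, b = a + k := ⟨(b - a).toNat, by omega⟩
  subst hk
  induction k with
  | zero => simp
  | succ n ih =>
    have h1 : f (a + n) < f (a + n + 1) := hf (by omega)
    have h2 : a + ((n + 1 : ℕ) : ℤ) = a + (n : ℕ) + 1 := by push_cast; ring
    rw [h2]
    have := ih (by omega)
    omega

lemma occEnum_unique {x : ℤ → A} {u : List A} {p q : ℤ → ℤ}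
    (hp : IsOccEnum x u p) (hq : IsOccEnum x u q) : p = q := by
  obtain ⟨hp0, hpm, hpo, hps⟩ := hp
  obtain ⟨hq0, hqm, hqo, hqs⟩ := hq
  choose g hgp using fun n => hps _ (hqo n)
  choose h hhp using fun n => hqs _ (hpo n)
  have hgm : StrictMono g := fun a b hab => by
    have : p (g a) < p (g b) := by rw [hgp, hgp]; exact hqm hab
    exact hpm.lt_iff_lt.mp this
  have hhm : StrictMono h := fun a b hab => by
    have : q (h a) < q (h b) := by rw [hhp, hhp]; exact hpm hab
    exact hqm.lt_iff_lt.mp this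
  have hhg : ∀ n, h (g n) = n := fun n => hqm.injective (by rw [hhp, hgp])
  have hg0 : g 0 = 0 := hpm.injective (by rw [hgp, hq0, hp0])
  have h0 : h 0 = 0 := hqm.injective (by rw [hhp, hp0, hq0])
  have hgid : ∀ n, g n = n := by
    intro n
    rcases le_or_gt 0 n with hn | hn
    · have h1 := strictMono_int_le hgm hn
      rw [hg0] at h1
      have h2 := strictMono_int_le hhm (show (0:ℤ) ≤ g n by omega)
      rw [h0, hhg] at h2
      omega
    · have h1 := strictMono_int_le hgm hn.le
      rw [hg0] at h1
      have h2 := strictMono_int_le hhm (show g n ≤ 0 by omega)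
      rw [h0, hhg] at h2
      omega
  funext n
  rw [← hgp n, hgid]

lemma canon_image {y : ℤ → ℕ}
    (h5 : ∀ n : ℕ, y n ≤ Set.ncard {k | ∃ m : ℕ, m < n ∧ y m = k}) (n : ℕ) :
    (Finset.range n).image (fun m : ℕ => y m) =
      Finset.range (((Finset.range n).image (fun m : ℕ => y m)).card) := by
  induction n with
  | zero => simp
  | succ n ih =>
    have hset : {k | ∃ m : ℕ, m < n ∧ y m = k} =
        ↑((Finset.range n).image (fun m : ℕ => y m)) := by
      ext k; simp
    have hcard := h5 n
    rw [hset, Set.ncard_coe_finset] at hcard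
    rw [Finset.range_add_one, Finset.image_insert]
    by_cases hy : y n ∈ (Finset.range n).image (fun m : ℕ => y m)
    · rw [Finset.insert_eq_self.mpr hy]
      exact ih
    · have hnotlt : ¬ y n < ((Finset.range n).image (fun m : ℕ => y m)).card := by
        intro hlt
        apply hy
        rw [ih]
        simpa using hlt
      have heq : y n = ((Finset.range n).image (fun m : ℕ => y m)).card := by omega
      rw [Finset.card_insert_of_notMem hy, ih, heq, ← Finset.range_add_one]
      simp

lemma canonical_eq {y y' : ℤ → ℕ}
    (h4 : ∀ n : ℤ, ∃ m : ℕ, y m = y n)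
    (h5 : ∀ n : ℕ, y n ≤ Set.ncard {k | ∃ m : ℕ, m < n ∧ y m = k})
    (h5' : ∀ n : ℕ, y' n ≤ Set.ncard {k | ∃ m : ℕ, m < n ∧ y' m = k})
    (hpat : ∀ n m : ℤ, y n = y m ↔ y' n = y' m) : y = y' := by
  have hnat : ∀ n : ℕ, y n = y' n := by
    intro n
    induction n using Nat.strong_induction_on with
    | _ n ih =>
      by_cases hold : ∃ m : ℕ, m < n ∧ y m = y n
      · obtain ⟨m, hm, hym⟩ := hold
        have : y' m = y' n := (hpat m n).mp hym
        rw [← this, ← ih m hm, hym]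
      · have hold' : ¬ ∃ m : ℕ, m < n ∧ y' m = y' n := by
          rintro ⟨m, hm, hym⟩
          exact hold ⟨m, hm, (hpat m n).mpr hym⟩
        have himg : (Finset.range n).image (fun m : ℕ => y m) =
            (Finset.range n).image (fun m : ℕ => y' m) :=
          Finset.image_congr (fun m hm => ih m (Finset.mem_range.mp hm))
        have hset : {k | ∃ m : ℕ, m < n ∧ y m = k} =
            ↑((Finset.range n).image (fun m : ℕ => y m)) := by ext k; simp
        have hset' : {k | ∃ m : ℕ, m < n ∧ y' m = k} =
            ↑((Finset.range n).image (fun m : ℕ => y' m)) := by ext k; simp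
        have hc := h5 n; rw [hset, Set.ncard_coe_finset] at hc
        have hc' := h5' n; rw [hset', Set.ncard_coe_finset] at hc'
        have hni : y n ∉ (Finset.range n).image (fun m : ℕ => y m) := by
          intro hmem
          obtain ⟨m, hm, hym⟩ := Finset.mem_image.mp hmem
          exact hold ⟨m, Finset.mem_range.mp hm, hym⟩
        have hni' : y' n ∉ (Finset.range n).image (fun m : ℕ => y' m) := by
          intro hmem
          obtain ⟨m, hm, hym⟩ := Finset.mem_image.mp hmem
          exact hold' ⟨m, Finset.mem_range.mp hm, hym⟩
        rw [canon_image h5 n] at hni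
        rw [canon_image h5' n] at hni'
        simp only [Finset.mem_range, not_lt] at hni hni'
        have hcards : ((Finset.range n).image (fun m : ℕ => y m)).card =
            ((Finset.range n).image (fun m : ℕ => y' m)).card := by rw [himg]
        omega
  funext n
  obtain ⟨m, hm⟩ := h4 n
  have h1 : y' m = y' n := (hpat m n).mp hm
  rw [← h1, ← hnat m, hm]

end DerivedAux

/-- for a uniformly recurrent x, a nonempty prefix u of x, a nonempty
prefix v of the derived sequence D_u(x), and w = Θ_{x,u}(v)u: w is a prefix of x,
D_v(D_u(x)) = D_w(x), and Θ_{x,u} ∘ Θ_{D_u(x),v} = Θ_{x,w}. -/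
theorem derived_sequence_composition {A : Type*} (x : ℤ → A)
    (hur : UniformlyRecurrent x)
    (u : List A) (hu : u ≠ []) (hupref : occursAt x u 0)
    (Θu : ℕ → List A) (yu : ℤ → ℕ) (hcu : IsReturnCoding x u Θu yu)
    (v : List ℕ) (hv : v ≠ []) (hvpref : occursAt yu v 0)
    (w : List A) (hw : w = wordApply Θu v ++ u)
    (Θv : ℕ → List ℕ) (yv : ℤ → ℕ) (hcv : IsReturnCoding yu v Θv yv)
    (Θw : ℕ → List A) (yw : ℤ → ℕ) (hcw : IsReturnCoding x w Θw yw) :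
    occursAt x w 0 ∧ yv = yw ∧
      ∀ k ∈ usedLetters yw, wordApply Θu (Θv k) = Θw k := by
  obtain ⟨p, ⟨hp0, hpm, hpo, hps⟩, hΘu, hyu_iff, -, -⟩ := hcu
  obtain ⟨q, ⟨hq0, hqm, hqo, hqs⟩, hΘv, hyv_iff, hyv4, hyv5⟩ := hcv
  obtain ⟨r, hrEnum, hΘw, hyw_iff, hyw4, hyw5⟩ := hcw
  have hpmono : Monotone p := hpm.monotone
  have hpnn : ∀ z : ℤ, 0 ≤ z → 0 ≤ p z := by
    intro z hz
    have h := hpmono hz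
    rw [hp0] at h
    exact h
  -- concatenation lemma
  have hconcat : ∀ (a : ℤ) (k : ℕ),
      wordApply Θu (subword yu a k) = subword x (p a) (p (a + k) - p a).toNat := by
    intro a k
    induction k with
    | zero => simp [wordApply, subword]
    | succ k ih =>
      have h1 : subword yu a (k + 1) = subword yu a k ++ [yu (a + k)] := by
        rw [subword_append yu a k 1]
        congr 1
        simp [subword]
      rw [h1]
      simp only [wordApply, List.flatMap_append, List.flatMap_cons, List.flatMap_nil,
        List.append_nil]
      rw [show (subword yu a k).flatMap Θu = wordApply Θu (subword yu a k) from rfl, ih]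
      have h2 : Θu (yu (a + k)) = subword x (p (a + k)) (p (a + k + 1) - p (a + k)).toNat := by
        rw [hΘu]
        rfl
      rw [h2]
      have hmk : p a ≤ p (a + k) := hpmono (by omega)
      have hmk1 : p (a + k) ≤ p (a + k + 1) := hpmono (by omega)
      have h3 : (p (a + ((k + 1 : ℕ) : ℤ)) - p a).toNat
          = (p (a + k) - p a).toNat + (p (a + k + 1) - p (a + k)).toNat := by
        rw [show a + ((k + 1 : ℕ) : ℤ) = a + (k : ℕ) + 1 by push_cast; ring]
        omega
      rw [h3, subword_append]
      congr 2
      omega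
  -- w at occurrences of v in yu
  have hWn : ∀ n : ℤ, occursAt yu v n →
      w = subword x (p n) ((p (n + v.length) - p n).toNat + u.length) := by
    intro n hn
    rw [occursAt_iff] at hn
    have hwa : wordApply Θu v = subword x (p n) ((p (n + v.length) - p n).toNat) := by
      conv_lhs => rw [← hn]
      rw [hconcat n v.length]
    rw [hw, hwa, subword_append]
    congr 1
    have hmn : p n ≤ p (n + v.length) := hpmono (by omega)
    rw [show p n + (((p (n + v.length) - p n).toNat : ℕ) : ℤ) = p (n + v.length) by omega]
    have h4 := (occursAt_iff x u (p (n + v.length))).mp (hpo (n + v.length))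
    exact h4.symm
  have hOccV : ∀ n : ℤ, occursAt yu v n → occursAt x w (p n) := by
    intro n hn
    have h1 := hWn n hn
    rw [occursAt_iff]
    rw [show w.length = (p (n + v.length) - p n).toNat + u.length by
      rw [h1, subword_length]]
    exact h1.symm
  have hw0 : occursAt x w 0 := by
    have := hOccV 0 hvpref
    rwa [hp0] at this
  -- w as prefix
  have hwpref : w = subword x 0 ((p (v.length : ℤ)).toNat + u.length) := by
    have h1 := hWn 0 hvpref
    rw [hp0, zero_add, sub_zero] at h1
    exact h1
  have hwlen : w.length = (p (v.length : ℤ)).toNat + u.length := by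
    rw [hwpref, subword_length]
  -- converse: every occurrence of w comes from an occurrence of v in yu
  have hOccW : ∀ i : ℤ, occursAt x w i → ∃ n : ℤ, p n = i ∧ occursAt yu v n := by
    intro i hi
    have hww : subword x i ((p (v.length : ℤ)).toNat + u.length)
        = subword x 0 ((p (v.length : ℤ)).toNat + u.length) := by
      have h1 := (occursAt_iff x w i).mp hi
      rw [hwlen] at h1
      rw [h1, hwpref]
    have hutrans : ∀ δ : ℕ, δ ≤ (p (v.length : ℤ)).toNat →
        (occursAt x u (i + δ) ↔ occursAt x u (δ : ℤ)) := by
      intro δ hδ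
      have h2 := subword_congr hww δ u.length (by omega)
      rw [zero_add] at h2
      rw [occursAt_iff, occursAt_iff, h2]
    have hui : occursAt x u i := by
      have h3 := hutrans 0 (by omega)
      simp only [Nat.cast_zero, add_zero] at h3
      exact h3.mpr hupref
    obtain ⟨n, hn⟩ := hps i hui
    have hpup : ∀ j : ℕ, j ≤ v.length → p (n + j) = i + p j := by
      intro j hj
      induction j with
      | zero => simpa [hp0] using hn
      | succ k ih =>
        have hpk := ih (by omega)
        have hk1nn : 0 ≤ p ((k : ℤ) + 1) := hpnn _ (by omega)
        have hkk1 : p (k : ℤ) < p ((k : ℤ) + 1) := hpm (by omega)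
        have hknn : 0 ≤ p (k : ℤ) := hpnn _ (by omega)
        have hk1V : p ((k : ℤ) + 1) ≤ p (v.length : ℤ) := hpmono (by push_cast; omega)
        have hVnn : 0 ≤ p (v.length : ℤ) := hpnn _ (by omega)
        have hδle : (p ((k : ℤ) + 1)).toNat ≤ (p (v.length : ℤ)).toNat := by omega
        have hocc1 : occursAt x u (((p ((k : ℤ) + 1)).toNat : ℤ)) := by
          rw [show (((p ((k : ℤ) + 1)).toNat : ℕ) : ℤ) = p ((k : ℤ) + 1) by omega]
          exact hpo _
        have hocc2 : occursAt x u (i + (p ((k : ℤ) + 1)).toNat) :=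
          (hutrans _ hδle).mpr hocc1
        obtain ⟨m', hm'⟩ := hps _ hocc2
        have hm'gt : n + k < m' := by
          apply hpm.lt_iff_lt.mp
          rw [hm', hpk]
          omega
        have hup : p (n + k + 1) ≤ i + p ((k : ℤ) + 1) := by
          have h6 := hpmono (show n + k + 1 ≤ m' by omega)
          rw [hm'] at h6
          omega
        rw [show (((k + 1 : ℕ)) : ℤ) = (k : ℤ) + 1 by push_cast; ring,
          show n + ((k : ℤ) + 1) = n + k + 1 by ring]
        rcases lt_or_ge (p (n + (k : ℤ) + 1)) (i + p ((k : ℤ) + 1)) with hlt | hge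
        · exfalso
          have hgt0 : i + p (k : ℤ) < p (n + k + 1) := by
            have h7 := hpm (show n + (k : ℤ) < n + k + 1 by omega)
            rw [hpk] at h7
            exact h7
          have hDnn : 0 ≤ p (n + (k : ℤ) + 1) - i := by omega
          have hDle : (p (n + (k : ℤ) + 1) - i).toNat ≤ (p (v.length : ℤ)).toNat := by omega
          have hoccD : occursAt x u (i + ((p (n + (k : ℤ) + 1) - i).toNat : ℤ)) := by
            rw [show i + ((p (n + (k : ℤ) + 1) - i).toNat : ℤ) = p (n + k + 1) by omega]
            exact hpo _
          have hoccD2 := (hutrans _ hDle).mp hoccD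
          obtain ⟨m'', hm''⟩ := hps _ hoccD2
          have hgt1 : (k : ℤ) < m'' := hpm.lt_iff_lt.mp (by rw [hm'']; omega)
          have hgt2 : m'' < (k : ℤ) + 1 := hpm.lt_iff_lt.mp (by rw [hm'']; omega)
          omega
        · omega
    have hvn : occursAt yu v n := by
      intro kk
      have hkV : (kk : ℕ) < v.length := kk.isLt
      have e1 : p (n + kk) = i + p (kk : ℤ) := hpup kk (by omega)
      have e2 : p (n + kk + 1) = i + p ((kk : ℤ) + 1) := by
        have h8 := hpup (kk + 1) (by omega)
        rw [show ((((kk : ℕ) + 1 : ℕ)) : ℤ) = (kk : ℤ) + 1 by push_cast; ring,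
          show n + ((kk : ℤ) + 1) = n + kk + 1 by ring] at h8
        exact h8
      have hretk : retWordAt x p (n + kk) = retWordAt x p (kk : ℤ) := by
        unfold retWordAt
        rw [e1, e2]
        rw [show i + p ((kk : ℤ) + 1) - (i + p (kk : ℤ)) = p ((kk : ℤ) + 1) - p (kk : ℤ) by ring]
        have hknn : 0 ≤ p (kk : ℤ) := hpnn _ (by omega)
        have hkk1 : p (kk : ℤ) ≤ p ((kk : ℤ) + 1) := hpmono (by omega)
        have hkL : p ((kk : ℤ) + 1) ≤ p (v.length : ℤ) := hpmono (by push_cast; omega)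
        have h5 := subword_congr hww (p (kk : ℤ)).toNat ((p ((kk : ℤ) + 1) - p (kk : ℤ)).toNat)
          (by omega)
        rw [zero_add] at h5
        rw [show i + (((p (kk : ℤ)).toNat : ℕ) : ℤ) = i + p (kk : ℤ) by omega,
          show (((p (kk : ℤ)).toNat : ℕ) : ℤ) = p (kk : ℤ) by omega] at h5
        exact h5
      have h9 := (hyu_iff (n + kk) (kk : ℤ)).mpr hretk
      rw [h9]
      have h6 := hvpref kk
      rwa [zero_add] at h6
    exact ⟨n, hn, hvn⟩
  -- r = p ∘ q
  have hpq : IsOccEnum x w (fun m => p (q m)) := by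
    refine ⟨show p (q 0) = 0 by rw [hq0, hp0], hpm.comp hqm, fun m => hOccV _ (hqo m), fun i hi => ?_⟩
    obtain ⟨n, hpn, hvn⟩ := hOccW i hi
    obtain ⟨m, hm⟩ := hqs n hvn
    exact ⟨m, show p (q m) = i by rw [hm, hpn]⟩
  have hrpq : r = fun m => p (q m) := occEnum_unique hrEnum hpq
  have hqmono : Monotone q := hqm.monotone
  -- return word identity
  have hret : ∀ m : ℤ, retWordAt x r m = wordApply Θu (retWordAt yu q m) := by
    intro m
    have hqle : q m ≤ q (m + 1) := hqmono (by omega)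
    rw [hrpq]
    unfold retWordAt
    simp only []
    rw [hconcat (q m) ((q (m + 1) - q m).toNat)]
    rw [show q m + (((q (m + 1) - q m).toNat : ℕ) : ℤ) = q (m + 1) by omega]
  -- injectivity of wordApply Θu on return words of yu to v
  have hinj : ∀ m m' : ℤ, retWordAt x r m = retWordAt x r m' →
      retWordAt yu q m = retWordAt yu q m' := by
    intro m m' hret'
    rw [hrpq] at hret'
    unfold retWordAt at hret' ⊢
    simp only [] at hret' ⊢
    set a := q m with ha
    set b := q (m + 1) with hb
    set a' := q m' with ha'
    set b' := q (m' + 1) with hb'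
    have hab : a < b := hqm (by omega)
    have ha'b' : a' < b' := hqm (by omega)
    have hpab : p a ≤ p b := hpmono hab.le
    have hpa'b' : p a' ≤ p b' := hpmono ha'b'.le
    have hLL : (p b' - p a').toNat = (p b - p a).toNat := by
      have hlc := congrArg List.length hret'
      rw [subword_length, subword_length] at hlc
      omega
    rw [hLL] at hret'
    have hub : subword x (p b) u.length = u := (occursAt_iff x u (p b)).mp (hpo b)
    have hub' : subword x (p b') u.length = u := (occursAt_iff x u (p b')).mp (hpo b')
    have hE : subword x (p a) ((p b - p a).toNat + u.length)
        = subword x (p a') ((p b - p a).toNat + u.length) := by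
      rw [subword_append, subword_append, hret']
      congr 1
      rw [show p a + (((p b - p a).toNat : ℕ) : ℤ) = p b by omega,
        show p a' + (((p b - p a).toNat : ℕ) : ℤ) = p b' by omega]
      rw [hub, hub']
    have hEocc : ∀ δ : ℕ, δ ≤ (p b - p a).toNat →
        (occursAt x u (p a + δ) ↔ occursAt x u (p a' + δ)) := by
      intro δ hδ
      have h2 := subword_congr hE δ u.length (by omega)
      rw [occursAt_iff, occursAt_iff, h2]
    have hstep2 : ∀ j : ℕ, (j : ℤ) ≤ b - a → p (a + j) - p a = p (a' + j) - p a' := by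
      intro j hj
      induction j with
      | zero => simp
      | succ k ih =>
        have hk1 : (k : ℤ) + 1 ≤ b - a := by push_cast at hj; omega
        have ihk := ih (by omega)
        rw [show ((((k : ℕ) + 1 : ℕ)) : ℤ) = (k : ℤ) + 1 by push_cast; ring,
          show a + ((k : ℤ) + 1) = a + k + 1 by ring,
          show a' + ((k : ℤ) + 1) = a' + k + 1 by ring]
        have h0 : p a ≤ p (a + k) := hpmono (by omega)
        have h1 : p (a + k) < p (a + k + 1) := hpm (by omega)
        have h2 : p (a + k + 1) ≤ p b := hpmono (by omega)
        have h0' : p a' ≤ p (a' + k) := hpmono (by omega)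
        have h1' : p (a' + k) < p (a' + k + 1) := hpm (by omega)
        have hδle : (p (a + k + 1) - p a).toNat ≤ (p b - p a).toNat := by omega
        have hocc1 : occursAt x u (p a + ((p (a + k + 1) - p a).toNat : ℤ)) := by
          rw [show p a + ((p (a + k + 1) - p a).toNat : ℤ) = p (a + k + 1) by omega]
          exact hpo _
        have hocc2 := (hEocc _ hδle).mp hocc1
        obtain ⟨m₀, hm₀⟩ := hps _ hocc2
        have hm₀gt : a' + k < m₀ := hpm.lt_iff_lt.mp (by rw [hm₀]; omega)
        have hub1 : p (a' + k + 1) ≤ p a' + ((p (a + k + 1) - p a).toNat : ℤ) := by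
          have h6 := hpmono (show a' + k + 1 ≤ m₀ by omega)
          rw [hm₀] at h6
          exact h6
        have hδ'le : (p (a' + k + 1) - p a').toNat ≤ (p b - p a).toNat := by omega
        have hocc1' : occursAt x u (p a' + ((p (a' + k + 1) - p a').toNat : ℤ)) := by
          rw [show p a' + ((p (a' + k + 1) - p a').toNat : ℤ) = p (a' + k + 1) by omega]
          exact hpo _
        have hocc2' := (hEocc _ hδ'le).mpr hocc1'
        obtain ⟨m₁, hm₁⟩ := hps _ hocc2'
        have hm₁gt : a + k < m₁ := hpm.lt_iff_lt.mp (by rw [hm₁]; omega)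
        have hub2 : p (a + k + 1) ≤ p a + ((p (a' + k + 1) - p a').toNat : ℤ) := by
          have h6 := hpmono (show a + k + 1 ≤ m₁ by omega)
          rw [hm₁] at h6
          exact h6
        omega
    have hba' : a' + (b - a) = b' := by
      have h1 := hstep2 (b - a).toNat (by omega)
      rw [show (((b - a).toNat : ℕ) : ℤ) = b - a by omega,
        show a + (b - a) = b by ring] at h1
      have h3 : p (a' + (b - a)) = p b' := by omega
      exact hpm.injective h3
    have hlen2 : (b' - a').toNat = (b - a).toNat := by omega
    rw [hlen2, subword_eq_iff]
    intro k hk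
    apply (hyu_iff (a + k) (a' + k)).mpr
    unfold retWordAt
    have e1 := hstep2 k (by omega)
    have e2 : p (a + k + 1) - p a = p (a' + k + 1) - p a' := by
      have h6 := hstep2 (k + 1) (by push_cast; omega)
      rw [show ((((k : ℕ) + 1 : ℕ)) : ℤ) = (k : ℤ) + 1 by push_cast; ring,
        show a + ((k : ℤ) + 1) = a + k + 1 by ring,
        show a' + ((k : ℤ) + 1) = a' + k + 1 by ring] at h6
      exact h6
    have h0 : p a ≤ p (a + k) := hpmono (by omega)
    have h1 : p (a + k) < p (a + k + 1) := hpm (by omega)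
    have h2 : p (a + k + 1) ≤ p b := hpmono (by omega)
    have hlen3 : (p (a' + k + 1) - p (a' + k)).toNat = (p (a + k + 1) - p (a + k)).toNat := by
      omega
    rw [hlen3]
    have h5 := subword_congr hE (p (a + k) - p a).toNat ((p (a + k + 1) - p (a + k)).toNat)
      (by omega)
    rw [show p a + (((p (a + k) - p a).toNat : ℕ) : ℤ) = p (a + k) by omega,
      show p a' + (((p (a + k) - p a).toNat : ℕ) : ℤ) = p (a' + k) by omega] at h5
    exact h5
  -- equality pattern
  have hpattern : ∀ n m : ℤ, yv n = yv m ↔ yw n = yw m := by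
    intro n m
    rw [hyv_iff, hyw_iff]
    constructor
    · intro h
      rw [hret, hret, h]
    · intro h
      exact hinj n m h
  have hyveq : yv = yw := canonical_eq hyv4 hyv5 hyw5 hpattern
  refine ⟨hw0, hyveq, ?_⟩
  intro k hk
  obtain ⟨n, hn⟩ := hk
  rw [← hn, hΘw n, ← hyveq, hΘv n]
  exact (hret n).symm


end PisotDE
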